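/- arXiv:1310.2378 — 2 statements merged into one kernel-verified Lean document; each statement's English description precedes it below -/
import Mathlib

section
/- Let T be a tree whose edge set is partitioned into κ ≥ 2 nonempty parts E_1,...,E_κ, each of which induces a subtree of T. Then some part E_h is 'extremal': at most one vertex of T is incident both to an edge of E_h and to an edge of some other part. -/
open Finset

/-- Double-counting helper: summing over classes the number of vertices in the
class satisfying `Q` equals summing over vertices satisfying `Q` the number of
classes containing them. -/
lemma double_count {V : Type*} [Fintype V] {κ : ℕ} (S : Fin κ → Set V)
    [∀ i, DecidablePred (· ∈ S i)] (Q : V → Prop) [DecidablePred Q] :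
    ∑ i : Fin κ, (univ.filter fun v => v ∈ S i ∧ Q v).card
      = ∑ v ∈ univ.filter Q, (univ.filter fun i : Fin κ => v ∈ S i).card := by
  simp only [Finset.card_filter]
  rw [Finset.sum_comm, Finset.sum_filter]
  refine Finset.sum_congr rfl fun v _ => ?_
  split_ifs with h <;> simp [h]

/-- Let `T` be a tree whose edge set is partitioned into `κ ≥ 2` nonempty parts
`P 0, …, P (κ-1)`, each inducing a subtree of `T`. Then some part `P h` is
extremal: at most one vertex of `T` is incident both to an edge of `P h` and to
an edge of another part. -/
theorem exists_extremal_edge_class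
    {V : Type*} [Fintype V] (T : SimpleGraph V)
    (hconn : T.Connected) (hacyc : T.IsAcyclic)
    (κ : ℕ) (hκ : 2 ≤ κ) (P : Fin κ → Set (Sym2 V))
    (hne : ∀ i, (P i).Nonempty)
    (hdisj : Pairwise fun i j => Disjoint (P i) (P j))
    (hcover : (⋃ i, P i) = T.edgeSet)
    (hsub : ∀ i, ((SimpleGraph.fromEdgeSet (P i)).induce
      {v : V | ∃ e ∈ P i, v ∈ e}).Connected) :
    ∃ h : Fin κ, {v : V | (∃ e ∈ P h, v ∈ e) ∧
      ∃ i : Fin κ, i ≠ h ∧ ∃ e ∈ P i, v ∈ e}.Subsingleton := by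
  classical
  by_contra hcon
  push_neg at hcon
  set S : Fin κ → Set V := fun i => {v : V | ∃ e ∈ P i, v ∈ e} with hSdef
  have hPsub : ∀ i, P i ⊆ T.edgeSet := fun i => hcover ▸ Set.subset_iUnion P i
  -- richness predicate
  set R : V → Prop := fun v => ∃ i j : Fin κ, i ≠ j ∧ v ∈ S i ∧ v ∈ S j with hRdef
  -- each class has at least two rich vertices
  have hrich2 : ∀ h : Fin κ,
      2 ≤ (univ.filter fun v => v ∈ S h ∧ R v).card := by
    intro h
    obtain ⟨x, hx, y, hy, hxy⟩ := hcon h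
    obtain ⟨hx1, i, hi, hx2⟩ := hx
    obtain ⟨hy1, j, hj, hy2⟩ := hy
    refine Finset.one_lt_card.mpr ⟨x, ?_, y, ?_, hxy⟩ <;>
      simp only [Finset.mem_filter, Finset.mem_univ, true_and]
    · exact ⟨hx1, i, h, hi, hx2, hx1⟩
    · exact ⟨hy1, j, h, hj, hy2, hy1⟩
  -- each class is a tree: |S i| = |P i| + 1
  have hcard : ∀ i : Fin κ,
      (univ.filter fun v => v ∈ S i).card = (P i).ncard + 1 := by
    intro i
    set G : SimpleGraph (S i) := (SimpleGraph.fromEdgeSet (P i)).induce (S i) with hG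
    have hle : SimpleGraph.fromEdgeSet (P i) ≤ T := by
      have := SimpleGraph.fromEdgeSet_mono (hPsub i)
      rwa [SimpleGraph.fromEdgeSet_edgeSet] at this
    let f : G →g T :=
      (SimpleGraph.Hom.ofLE hle).comp (SimpleGraph.Embedding.induce (S i)).toHom
    have hfinj : Function.Injective f := by
      intro a b hab
      exact Subtype.ext hab
    have hGac : G.IsAcyclic := by
      intro v c hc
      exact hacyc (c.map f) (hc.map hfinj)
    have htree : G.IsTree := ⟨hsub i, hGac⟩
    have hcards := htree.card_edgeFinset
    -- edge count of G equals ncard of P i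
    have himg : Sym2.map (Subtype.val : S i → V) '' G.edgeSet = P i := by
      ext e
      constructor
      · rintro ⟨e', he', rfl⟩
        induction e' with
        | _ u v =>
          rw [SimpleGraph.mem_edgeSet, hG] at he'
          simp only [SimpleGraph.comap_adj, Function.Embedding.coe_subtype,
            SimpleGraph.fromEdgeSet_adj] at he'
          exact he'.1
      · intro he
        induction e with
        | _ u v =>
          have huv : u ≠ v := by
            intro h; exact (T.irrefl (h ▸ (hPsub i he))).elim
          have hu : u ∈ S i := ⟨s(u, v), he, Sym2.mem_mk_left u v⟩
          have hv : v ∈ S i := ⟨s(u, v), he, Sym2.mem_mk_right u v⟩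
          refine ⟨s((⟨u, hu⟩ : S i), ⟨v, hv⟩), ?_, rfl⟩
          rw [SimpleGraph.mem_edgeSet, hG]
          simp only [SimpleGraph.comap_adj, Function.Embedding.coe_subtype,
            SimpleGraph.fromEdgeSet_adj]
          exact ⟨he, huv⟩
    have hinj2 : Function.Injective (Sym2.map (Subtype.val : S i → V)) :=
      Sym2.map.injective Subtype.val_injective
    have hnc : G.edgeSet.ncard = (P i).ncard := by
      rw [← himg, Set.ncard_image_of_injective _ hinj2]
    have h1 : G.edgeFinset.card = G.edgeSet.ncard := by
      rw [← SimpleGraph.coe_edgeFinset, Set.ncard_coe_finset]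
    have h2 : Fintype.card (S i) = (univ.filter fun v => v ∈ S i).card :=
      Fintype.card_subtype _
    omega
  -- sum of |P i| equals number of edges of T
  have hsumP : ∑ i : Fin κ, (P i).ncard = T.edgeFinset.card := by
    have : T.edgeFinset = Finset.univ.biUnion (fun i : Fin κ => (P i).toFinset) := by
      ext e
      simp only [Finset.mem_biUnion, Finset.mem_univ, true_and, Set.mem_toFinset,
        SimpleGraph.mem_edgeFinset, ← hcover, Set.mem_iUnion]
    rw [this, Finset.card_biUnion]
    · exact Finset.sum_congr rfl fun i _ => Set.ncard_eq_toFinset_card' _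
    · intro i _ j _ hij
      simpa [Finset.disjoint_left, Set.disjoint_left] using hdisj hij
  have htreeT : T.edgeFinset.card + 1 = Fintype.card V := (⟨hconn, hacyc⟩ :
    T.IsTree).card_edgeFinset
  -- every vertex is in some class
  have hdeg1 : ∀ v : V, 1 ≤ (univ.filter fun i : Fin κ => v ∈ S i).card := by
    intro v
    -- v is incident to some edge of T
    obtain ⟨e0, he0⟩ := hne ⟨0, by omega⟩
    have he0T := hPsub ⟨0, by omega⟩ he0
    induction e0 with
    | _ a b =>
      have hab : T.Adj a b := he0T
      have : ∃ w, T.Adj v w := by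
        rcases eq_or_ne v a with rfl | hva
        · exact ⟨b, hab⟩
        · obtain ⟨p⟩ := hconn.preconnected v a
          cases p with
          | nil => exact absurd rfl hva
          | cons h _ => exact ⟨_, h⟩
      obtain ⟨w, hw⟩ := this
      have : s(v, w) ∈ T.edgeSet := hw
      rw [← hcover, Set.mem_iUnion] at this
      obtain ⟨i, hi⟩ := this
      rw [Finset.one_le_card]
      exact ⟨i, Finset.mem_filter.mpr ⟨Finset.mem_univ i,
        ⟨s(v, w), hi, Sym2.mem_mk_left v w⟩⟩⟩
  have hdegR : ∀ v : V, R v → 2 ≤ (univ.filter fun i : Fin κ => v ∈ S i).card := by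
    rintro v ⟨i, j, hij, hi, hj⟩
    exact Finset.one_lt_card.mpr ⟨i, Finset.mem_filter.mpr ⟨Finset.mem_univ i, hi⟩,
      j, Finset.mem_filter.mpr ⟨Finset.mem_univ j, hj⟩, hij⟩
  have hdegNR : ∀ v : V, ¬ R v → (univ.filter fun i : Fin κ => v ∈ S i).card = 1 := by
    intro v hv
    refine le_antisymm ?_ (hdeg1 v)
    rw [Finset.card_le_one]
    intro i hi j hj
    by_contra hij
    exact hv ⟨i, j, hij, (Finset.mem_filter.mp hi).2, (Finset.mem_filter.mp hj).2⟩
  -- put it together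
  have hDC1 := double_count S (fun _ => True)
  have hDC2 := double_count S R
  simp only [and_true, Finset.filter_true] at hDC1
  -- total degree sum
  have htot : ∑ v : V, (univ.filter fun i : Fin κ => v ∈ S i).card
      = T.edgeFinset.card + κ := by
    rw [← hDC1]
    rw [Finset.sum_congr rfl fun i _ => hcard i, Finset.sum_add_distrib]
    simp [hsumP]
  -- split total into rich and non-rich
  have hsplit : ∑ v : V, (univ.filter fun i : Fin κ => v ∈ S i).card
      = (∑ v ∈ univ.filter R, (univ.filter fun i : Fin κ => v ∈ S i).card)
        + (univ.filter fun v => ¬ R v).card := by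
    rw [← Finset.sum_filter_add_sum_filter_not univ R]
    congr 1
    rw [Finset.card_eq_sum_ones]
    exact Finset.sum_congr rfl fun v hv => hdegNR v (Finset.mem_filter.mp hv).2
  set r := (univ.filter R).card with hr
  have hcompl : r + (univ.filter fun v => ¬ R v).card = Fintype.card V := by
    rw [hr, Finset.card_filter_add_card_filter_not]
    exact Finset.card_univ
  have hA2r : 2 * r ≤ ∑ v ∈ univ.filter R, (univ.filter fun i : Fin κ => v ∈ S i).card := by
    calc 2 * r = ∑ _v ∈ univ.filter R, 2 := by rw [Finset.sum_const, smul_eq_mul, mul_comm]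
    _ ≤ _ := Finset.sum_le_sum fun v hv => hdegR v (Finset.mem_filter.mp hv).2
  have hA2κ : 2 * κ ≤ ∑ v ∈ univ.filter R, (univ.filter fun i : Fin κ => v ∈ S i).card := by
    rw [← hDC2]
    calc 2 * κ = ∑ _i : Fin κ, 2 := by simp [mul_comm]
    _ ≤ _ := Finset.sum_le_sum fun i _ => hrich2 i
  omega
end

section
/- Let T be a tree whose edges are partitioned into κ subtrees E_1,...,E_κ. Then the number of rich vertices (vertices incident to edges of more than one class) is at most κ − 1. -/
open SimpleGraph Set

/-- Each part, as an induced graph on its vertex set, has edge count equal to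
the cardinality of the part (the edges correspond bijectively). -/
lemma part_edgeSet_image {V : Type*} (T : SimpleGraph V) {Q : Set (Sym2 V)}
    (hQ : Q ⊆ T.edgeSet) :
    Sym2.map (Subtype.val) ''
      ((SimpleGraph.fromEdgeSet Q).induce {v : V | ∃ e ∈ Q, v ∈ e}).edgeSet = Q := by
  ext e
  constructor
  · rintro ⟨f, hf, rfl⟩
    induction f with
    | _ a b =>
      rw [SimpleGraph.mem_edgeSet] at hf
      simp only [SimpleGraph.comap_adj, SimpleGraph.fromEdgeSet_adj] at hf
      simpa using hf.1
  · intro he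
    induction e with
    | _ x y =>
      have hxy : x ≠ y := by
        intro h
        exact T.not_isDiag_of_mem_edgeSet (hQ he) (by simp [h])
      have hx : x ∈ {v : V | ∃ e ∈ Q, v ∈ e} := ⟨s(x, y), he, by simp⟩
      have hy : y ∈ {v : V | ∃ e ∈ Q, v ∈ e} := ⟨s(x, y), he, by simp⟩
      refine ⟨s((⟨x, hx⟩ : {v : V | ∃ e ∈ Q, v ∈ e}), ⟨y, hy⟩), ?_, by simp⟩
      rw [SimpleGraph.mem_edgeSet]
      simp only [SimpleGraph.comap_adj, SimpleGraph.fromEdgeSet_adj]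
      exact ⟨he, by simpa using hxy⟩

/-- Let `T` be a tree whose edge set is partitioned into `κ ≥ 1` nonempty parts
`P 0, …, P (κ-1)`, each inducing a subtree of `T`. Then the number of rich
vertices (vertices incident to edges of at least two distinct parts) is at most
`κ − 1`. -/
theorem rich_vertices_le_parts_sub_one
    {V : Type*} [Fintype V] (T : SimpleGraph V)
    (hconn : T.Connected) (hacyc : T.IsAcyclic)
    (κ : ℕ) (hκ : 1 ≤ κ) (P : Fin κ → Set (Sym2 V))
    (hne : ∀ i, (P i).Nonempty)
    (hdisj : Pairwise fun i j => Disjoint (P i) (P j))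
    (hcover : (⋃ i, P i) = T.edgeSet)
    (hsub : ∀ i, ((SimpleGraph.fromEdgeSet (P i)).induce
      {v : V | ∃ e ∈ P i, v ∈ e}).Connected) :
    {v : V | ∃ i j : Fin κ, i ≠ j ∧ (∃ e ∈ P i, v ∈ e) ∧
      ∃ e ∈ P j, v ∈ e}.ncard ≤ κ - 1 := by
  classical
  set S : Fin κ → Set V := fun i => {v : V | ∃ e ∈ P i, v ∈ e} with hS
  have hPsub : ∀ i, P i ⊆ T.edgeSet := fun i => hcover ▸ Set.subset_iUnion P i
  -- each part induces a tree
  have hcard : ∀ i, (P i).ncard + 1 = (S i).ncard := by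
    intro i
    set H := (SimpleGraph.fromEdgeSet (P i)).induce (S i) with hH
    have hle : SimpleGraph.fromEdgeSet (P i) ≤ T := by
      rw [← SimpleGraph.fromEdgeSet_edgeSet T]
      exact SimpleGraph.fromEdgeSet_mono (hPsub i)
    have hacH : H.IsAcyclic := by
      intro x c hc
      let f : H →g T :=
        (SimpleGraph.Hom.ofLE hle).comp
          (SimpleGraph.Embedding.induce (S i)).toHom
      have hfinj : Function.Injective f := by
        intro a b h
        apply Subtype.ext
        exact h
      exact hacyc (c.map f) (hc.map hfinj)
    have htree : H.IsTree := ⟨hsub i, hacH⟩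
    have : Fintype (S i) := Fintype.ofFinite _
    have : Fintype H.edgeSet := Fintype.ofFinite _
    have hc := htree.card_edgeFinset
    have h1 : H.edgeFinset.card = H.edgeSet.ncard := by
      rw [Set.ncard_eq_toFinset_card']
      congr 1
    have h2 : H.edgeSet.ncard = (P i).ncard := by
      rw [← part_edgeSet_image T (hPsub i)]
      exact (Set.ncard_image_of_injective _ (Sym2.map.injective Subtype.val_injective)).symm
    have h3 : (S i).ncard = Fintype.card (S i) := by
      rw [Set.ncard_eq_toFinset_card', Set.toFinset_card]
    omega
  -- a generic counting identity
  have key : ∀ (A : Set V), A.ncard = (Finset.univ.filter (fun v => v ∈ A)).card := by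
    intro A
    rw [Set.ncard_eq_toFinset_card A (Set.toFinite A)]
    congr 1
    ext v
    simp
  have keyE : ∀ (A : Set (Sym2 V)),
      A.ncard = (Finset.univ.filter (fun e => e ∈ A)).card := by
    intro A
    rw [Set.ncard_eq_toFinset_card A (Set.toFinite A)]
    congr 1
    ext v
    simp
  -- every vertex lies in some part
  have hv : ∀ v : V, ∃ i, v ∈ S i := by
    intro v
    obtain ⟨e0, he0⟩ := hne ⟨0, hκ⟩
    obtain ⟨x, y, hxy⟩ : ∃ x y, s(x, y) ∈ T.edgeSet := Sym2.exists.mp ⟨e0, hPsub _ he0⟩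
    have hxyne : x ≠ y := (T.mem_edgeSet.1 hxy).ne
    have hwv : ∃ w, w ≠ v := by
      rcases eq_or_ne v x with rfl | h
      · exact ⟨y, hxyne.symm⟩
      · exact ⟨x, h.symm⟩
    obtain ⟨w, hwv⟩ := hwv
    obtain ⟨p⟩ := hconn.preconnected v w
    have hnil : ¬p.Nil := SimpleGraph.Walk.not_nil_of_ne (Ne.symm hwv)
    have hadj : T.Adj v (p.getVert 1) := p.adj_snd hnil
    have hmem : s(v, p.getVert 1) ∈ ⋃ i, P i := by
      rw [hcover]; exact T.mem_edgeSet.2 hadj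
    obtain ⟨i, hi⟩ := Set.mem_iUnion.1 hmem
    exact ⟨i, s(v, p.getVert 1), hi, by simp⟩
  -- the sum of part edge-counts is the total edge count
  have hsum1 : ∑ i, (P i).ncard = T.edgeSet.ncard := by
    simp_rw [keyE]
    rw [← Finset.card_biUnion]
    · congr 1
      ext e
      simp [← hcover]
    · intro i _ j _ hij
      rw [Function.onFun, Finset.disjoint_left]
      intro e he1 he2
      simp only [Finset.mem_filter] at he1 he2
      exact (Set.disjoint_left.1 (hdisj hij)) he1.2 he2.2
  have htot : ∑ i, (S i).ncard = T.edgeSet.ncard + κ := by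
    have : ∑ i, (S i).ncard = ∑ i, ((P i).ncard + 1) :=
      Finset.sum_congr rfl fun i _ => (hcard i).symm
    rw [this, Finset.sum_add_distrib, hsum1]
    simp
  -- double counting
  set c : V → ℕ := fun v => (Finset.univ.filter (fun i => v ∈ S i)).card with hc
  have hdc : ∑ i, (S i).ncard = ∑ v, c v := by
    simp_rw [key, hc, Finset.card_filter]
    rw [Finset.sum_comm]
    congr!
  -- the rich vertex finset
  set RS : Set V := {v : V | ∃ i j : Fin κ, i ≠ j ∧ (∃ e ∈ P i, v ∈ e) ∧
      ∃ e ∈ P j, v ∈ e} with hRS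
  set RF : Finset V := Finset.univ.filter (fun v => v ∈ RS) with hRF
  set NF : Finset V := Finset.univ.filter (fun v => ¬ v ∈ RS) with hNF
  have hRcard : RS.ncard = RF.card := by
    rw [key RS, hRF]
    congr!
  have h2 : ∀ v ∈ RF, 2 ≤ c v := by
    intro v hv'
    simp only [hRF, Finset.mem_filter, hRS, Set.mem_setOf_eq] at hv'
    obtain ⟨-, i, j, hij, hvi, hvj⟩ := hv'
    have hsub2 : ({i, j} : Finset (Fin κ)) ⊆ Finset.univ.filter (fun i => v ∈ S i) := by
      intro k hk
      simp only [Finset.mem_insert, Finset.mem_singleton] at hk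
      rcases hk with rfl | rfl
      · simp only [Finset.mem_filter, Finset.mem_univ, true_and]; exact hvi
      · simp only [Finset.mem_filter, Finset.mem_univ, true_and]; exact hvj
    calc 2 = ({i, j} : Finset (Fin κ)).card := (Finset.card_pair hij).symm
      _ ≤ c v := Finset.card_le_card hsub2
  have h1 : ∀ v ∈ NF, 1 ≤ c v := by
    intro v _
    obtain ⟨i, hi⟩ := hv v
    refine Finset.card_pos.2 ⟨i, ?_⟩
    simp only [Finset.mem_filter, Finset.mem_univ, true_and]
    exact hi
  have hsplit : ∑ v ∈ RF, c v + ∑ v ∈ NF, c v = ∑ v, c v :=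
    Finset.sum_filter_add_sum_filter_not _ _ _
  have hb1 : RF.card * 2 ≤ ∑ v ∈ RF, c v := by
    simpa [smul_eq_mul] using Finset.card_nsmul_le_sum RF c 2 h2
  have hb2 : NF.card * 1 ≤ ∑ v ∈ NF, c v := by
    simpa [smul_eq_mul] using Finset.card_nsmul_le_sum NF c 1 h1
  have hpart : RF.card + NF.card = Fintype.card V := by
    simpa [hRF, hNF] using
      Finset.card_filter_add_card_filter_not (s := Finset.univ)
        (p := fun v => v ∈ RS)
  -- the tree edge count
  have : Fintype T.edgeSet := Fintype.ofFinite _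
  have htree : T.IsTree := ⟨hconn, hacyc⟩
  have hTcount : T.edgeFinset.card + 1 = Fintype.card V := htree.card_edgeFinset
  have hTc2 : T.edgeFinset.card = T.edgeSet.ncard := by
    rw [Set.ncard_eq_toFinset_card']
    congr 1
  rw [hRcard]
  omega
end
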